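/- Let v, u ∈ D2 be two orthogonal unit vectors. Then the following are equivalent: (i) u ∈ V_v(0); (ii) L(u,v) = 0; (iii) L(u,u) = L(v,v); (iv) v ∈ V_u(0). Moreover, any of these statements implies that P_v = P_u on the orthogonal complement of span{u,v} in D2. -/
import Mathlib


open scoped RealInnerProductSpace
open Module Submodule

noncomputable section

variable {V : Type*} [NormedAddCommGroup V] [InnerProductSpace ℝ V]

/-- The curvature-type operator built from `ε` and the difference tensor `K`:
`R(X,Y)Z = ε(⟨Y,Z⟩X − ⟨X,Z⟩Y) − K(X,K(Y,Z)) + K(Y,K(X,Z))`. -/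
def Rc (ε : ℝ) (K : V →ₗ[ℝ] V →ₗ[ℝ] V) (X Y Z : V) : V :=
  ε • (⟪Y, Z⟫ • X - ⟪X, Z⟫ • Y) - K X (K Y Z) + K Y (K X Z)

/-- The bilinear map `L(v₁,v₂) = K(v₁,v₂) − (λ₁/2)⟨v₁,v₂⟩ e₁`. -/
def Lop (lam1 : ℝ) (e1 : V) (K : V →ₗ[ℝ] V →ₗ[ℝ] V) (v1 v2 : V) : V :=
  K v1 v2 - (lam1 / 2 * ⟪v1, v2⟫) • e1

/-- The distribution `D₂ = {v : v ⟂ e₁, K(e₁,v) = (λ₁/2)v}`. -/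
def D2s (lam1 : ℝ) (e1 : V) (K : V →ₗ[ℝ] V →ₗ[ℝ] V) : Submodule ℝ V :=
  (ℝ ∙ e1)ᗮ ⊓ Module.End.eigenspace (K e1) (lam1 / 2)

/-- The distribution `D₃ = {w : w ⟂ e₁, K(e₁,w) = μw}`. -/
def D3s (mu : ℝ) (e1 : V) (K : V →ₗ[ℝ] V →ₗ[ℝ] V) : Submodule ℝ V :=
  (ℝ ∙ e1)ᗮ ⊓ Module.End.eigenspace (K e1) mu

/-- The operator `P_v(ṽ) = K(v, L(v,ṽ))`, as a linear endomorphism of `V`. -/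
def Pop (lam1 : ℝ) (e1 : V) (K : V →ₗ[ℝ] V →ₗ[ℝ] V) (v : V) : V →ₗ[ℝ] V :=
  (K v) ∘ₗ (K v - (lam1 / 2) •
    ((LinearMap.toSpanSingleton ℝ V e1) ∘ₗ (innerSL ℝ v).toLinearMap))

/-- The eigenspace `V_v(c)` of `P_v` within the orthogonal complement of `v` in `D₂`. -/
def Vvs (lam1 c : ℝ) (e1 : V) (K : V →ₗ[ℝ] V →ₗ[ℝ] V) (v : V) : Submodule ℝ V :=
  D2s lam1 e1 K ⊓ (ℝ ∙ v)ᗮ ⊓ Module.End.eigenspace (Pop lam1 e1 K v) c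

/-- Lemma 4.9: for orthogonal unit vectors `v, u ∈ D₂`, the statements
`u ∈ V_v(0)`, `L(u,v) = 0`, `L(u,u) = L(v,v)`, `v ∈ V_u(0)` are equivalent, and any
of them implies `P_v = P_u` on the orthogonal complement of `span{u,v}` in `D₂`. -/
lemma Rc_add (ε : ℝ) (K : V →ₗ[ℝ] V →ₗ[ℝ] V) (X Y Z W : V) :
    Rc ε K X Y (Z + W) = Rc ε K X Y Z + Rc ε K X Y W := by
  simp only [Rc, inner_add_right, map_add]
  module

lemma Rc_smul (ε : ℝ) (K : V →ₗ[ℝ] V →ₗ[ℝ] V) (c : ℝ) (X Y Z : V) :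
    Rc ε K X Y (c • Z) = c • Rc ε K X Y Z := by
  simp only [Rc, real_inner_smul_right, map_smul]
  module

lemma Pop_eq (lam1 : ℝ) (e1 : V) (K : V →ₗ[ℝ] V →ₗ[ℝ] V) (x y : V) :
    Pop lam1 e1 K x y = K x (Lop lam1 e1 K x y) := by
  simp [Pop, Lop, LinearMap.comp_apply, LinearMap.sub_apply, LinearMap.smul_apply,
    LinearMap.toSpanSingleton_apply, smul_smul]

theorem stmt_11 {V : Type*} [NormedAddCommGroup V] [InnerProductSpace ℝ V]
    (n m : ℕ) (hn : finrank ℝ V = n) (hn2 : 2 ≤ n)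
    (ε : ℝ) (hε : ε = 1 ∨ ε = -1)
    (K : V →ₗ[ℝ] V →ₗ[ℝ] V)
    (hKsymm : ∀ X Y : V, K X Y = K Y X)
    (hKcub : ∀ X Y Z : V, ⟪K X Y, Z⟫ = ⟪K X Z, Y⟫)
    (hpar : ∀ X Y Z U : V,
      Rc ε K X Y (K Z U) = K (Rc ε K X Y Z) U + K Z (Rc ε K X Y U))
    (e1 : V) (he1 : ‖e1‖ = 1)
    (lam1 η μ τ : ℝ)
    (hlam1 : lam1 = ⟪K e1 e1, e1⟫) (hlam1pos : 0 < lam1)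
    (hmax : ∀ u : V, ‖u‖ = 1 → ⟪K u u, u⟫ ≤ lam1)
    (hdisc : 0 < lam1 ^ 2 - 4 * ε)
    (hη : η = Real.sqrt (lam1 ^ 2 - 4 * ε) / 2)
    (hμ : μ = (lam1 - Real.sqrt (lam1 ^ 2 - 4 * ε)) / 2)
    (hτ : τ = η * (η + lam1 / 2) / 4)
    (hm2 : 2 ≤ m) (hmn : m ≤ n - 1)
    (hdimD2 : finrank ℝ (D2s lam1 e1 K) = m - 1)
    (hsplit : (ℝ ∙ e1) ⊔ D2s lam1 e1 K ⊔ D3s μ e1 K = ⊤)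
    (hLD3 : ∀ v1 ∈ D2s lam1 e1 K, ∀ v2 ∈ D2s lam1 e1 K,
      Lop lam1 e1 K v1 v2 ∈ D3s μ e1 K)
    (hKD2 : ∀ v ∈ D2s lam1 e1 K, ∀ w ∈ D3s μ e1 K, K v w ∈ D2s lam1 e1 K)
    (v u : V) (hv : v ∈ D2s lam1 e1 K) (hu : u ∈ D2s lam1 e1 K)
    (hvu : ‖v‖ = 1) (huu : ‖u‖ = 1) (horth : ⟪v, u⟫ = 0) :
    (u ∈ Vvs lam1 0 e1 K v ↔ Lop lam1 e1 K u v = 0) ∧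
    (Lop lam1 e1 K u v = 0 ↔ Lop lam1 e1 K u u = Lop lam1 e1 K v v) ∧
    (Lop lam1 e1 K u u = Lop lam1 e1 K v v ↔ v ∈ Vvs lam1 0 e1 K u) ∧
    (u ∈ Vvs lam1 0 e1 K v →
      ∀ w ∈ D2s lam1 e1 K, ⟪u, w⟫ = 0 → ⟪v, w⟫ = 0 →
        K v (Lop lam1 e1 K v w) = K u (Lop lam1 e1 K u w)) := by
  -- scalar facts
  have hsq : Real.sqrt (lam1 ^ 2 - 4 * ε) ^ 2 = lam1 ^ 2 - 4 * ε := Real.sq_sqrt hdisc.le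
  have hη0 : 0 < η := by
    rw [hη]; have := Real.sqrt_pos.mpr hdisc; linarith
  have hηne : η ≠ 0 := ne_of_gt hη0
  have hε_eq : ε = lam1 ^ 2 / 4 - η ^ 2 := by rw [hη]; nlinarith [hsq]
  have hμ_eq : μ = lam1 / 2 - η := by rw [hμ, hη]; ring
  -- membership unfolding
  have hD2mem : ∀ x ∈ D2s lam1 e1 K, ⟪e1, x⟫ = 0 ∧ K e1 x = (lam1 / 2) • x := by
    intro x hx
    obtain ⟨h1, h2⟩ := Submodule.mem_inf.mp hx
    exact ⟨(Submodule.mem_orthogonal _ _).mp h1 e1 (Submodule.mem_span_singleton_self e1),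
      Module.End.mem_eigenspace_iff.mp h2⟩
  have hD3mem : ∀ y ∈ D3s μ e1 K, ⟪e1, y⟫ = 0 ∧ K e1 y = μ • y := by
    intro y hy
    obtain ⟨h1, h2⟩ := Submodule.mem_inf.mp hy
    exact ⟨(Submodule.mem_orthogonal _ _).mp h1 e1 (Submodule.mem_span_singleton_self e1),
      Module.End.mem_eigenspace_iff.mp h2⟩
  have hD2D3 : ∀ x ∈ D2s lam1 e1 K, ∀ y ∈ D3s μ e1 K, ⟪x, y⟫ = 0 := by
    intro x hx y hy
    have h1 : ⟪K e1 x, y⟫ = ⟪K e1 y, x⟫ := hKcub e1 x y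
    rw [(hD2mem x hx).2, (hD3mem y hy).2, real_inner_smul_left, real_inner_smul_left] at h1
    rw [real_inner_comm] at h1
    have hne : lam1 / 2 - μ ≠ 0 := by rw [hμ_eq]; simpa using hηne
    have h2 : (lam1 / 2 - μ) * ⟪y, x⟫ = 0 := by linear_combination h1
    have h3 := (mul_eq_zero.mp h2).resolve_left hne
    rw [real_inner_comm]; exact h3
  have he1e1 : ⟪e1, e1⟫ = 1 := by rw [real_inner_self_eq_norm_sq, he1]; norm_num
  -- K e1 e1 = lam1 • e1
  have hKe1e1 : K e1 e1 = lam1 • e1 := by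
    have key1 : ⟪K e1 e1 - lam1 • e1, e1⟫ = 0 := by
      rw [inner_sub_left, real_inner_smul_left, he1e1, ← hlam1]; ring
    have key2 : ∀ x ∈ D2s lam1 e1 K, ⟪K e1 e1 - lam1 • e1, x⟫ = 0 := by
      intro x hx
      have h1 := (hD2mem x hx).1
      have h2 : ⟪K e1 e1, x⟫ = lam1 / 2 * ⟪x, e1⟫ := by
        rw [hKcub e1 e1 x, (hD2mem x hx).2, real_inner_smul_left]
      have h3 : ⟪x, e1⟫ = 0 := by rw [real_inner_comm]; exact h1
      rw [inner_sub_left, real_inner_smul_left, h1, h2, h3]; ring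
    have key3 : ∀ y ∈ D3s μ e1 K, ⟪K e1 e1 - lam1 • e1, y⟫ = 0 := by
      intro y hy
      have h1 := (hD3mem y hy).1
      have h2 : ⟪K e1 e1, y⟫ = μ * ⟪y, e1⟫ := by
        rw [hKcub e1 e1 y, (hD3mem y hy).2, real_inner_smul_left]
      have h3 : ⟪y, e1⟫ = 0 := by rw [real_inner_comm]; exact h1
      rw [inner_sub_left, real_inner_smul_left, h1, h2, h3]; ring
    have hker : (ℝ ∙ e1) ⊔ D2s lam1 e1 K ⊔ D3s μ e1 K ≤
        LinearMap.ker ((innerSL ℝ (K e1 e1 - lam1 • e1)).toLinearMap) := by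
      refine sup_le (sup_le ?_ ?_) ?_
      · rw [Submodule.span_singleton_le_iff_mem]
        simp only [LinearMap.mem_ker, ContinuousLinearMap.coe_coe, innerSL_apply_apply]
        exact key1
      · intro x hx
        simp only [LinearMap.mem_ker, ContinuousLinearMap.coe_coe, innerSL_apply_apply]
        exact key2 x hx
      · intro y hy
        simp only [LinearMap.mem_ker, ContinuousLinearMap.coe_coe, innerSL_apply_apply]
        exact key3 y hy
    rw [hsplit] at hker
    have hdd : ⟪K e1 e1 - lam1 • e1, K e1 e1 - lam1 • e1⟫ = 0 := by
      have h7 := hker (Submodule.mem_top (x := K e1 e1 - lam1 • e1))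
      simp only [LinearMap.mem_ker, ContinuousLinearMap.coe_coe, innerSL_apply_apply] at h7
      exact h7
    have h0 : K e1 e1 - lam1 • e1 = 0 := inner_self_eq_zero.mp hdd
    rw [sub_eq_zero] at h0; exact h0
  -- curvature computations
  have hRe1 : ∀ a ∈ D2s lam1 e1 K, Rc ε K e1 a e1 = (η ^ 2) • a := by
    intro a ha
    obtain ⟨hae, haK⟩ := hD2mem a ha
    have hae' : ⟪a, e1⟫ = 0 := by rw [real_inner_comm]; exact hae
    rw [Rc, hKe1e1, map_smul, hKsymm a e1, haK, map_smul, haK, hae', he1e1, hε_eq]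
    module
  have hKdecomp : ∀ a b : V, K a b = Lop lam1 e1 K a b + (lam1 / 2 * ⟪a, b⟫) • e1 := by
    intro a b; rw [Lop]; abel
  have hR2 : ∀ a ∈ D2s lam1 e1 K, ∀ b ∈ D2s lam1 e1 K,
      Rc ε K e1 a b = η • Lop lam1 e1 K a b - (η ^ 2 * ⟪a, b⟫) • e1 := by
    intro a ha b hb
    obtain ⟨hae, haK⟩ := hD2mem a ha
    obtain ⟨hbe, hbK⟩ := hD2mem b hb
    have hLD : Lop lam1 e1 K a b ∈ D3s μ e1 K := hLD3 a ha b hb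
    rw [Rc, hbe, hKdecomp a b, map_add, map_smul, (hD3mem _ hLD).2, hKe1e1, hbK, map_smul,
      hKdecomp a b, hε_eq, hμ_eq]
    module
  have hR3 : ∀ a ∈ D2s lam1 e1 K, ∀ y ∈ D3s μ e1 K, Rc ε K e1 a y = (-η) • K a y := by
    intro a ha y hy
    have hay : ⟪a, y⟫ = 0 := hD2D3 a ha y hy
    have hKay := hKD2 a ha y hy
    rw [Rc, hay, (hD3mem y hy).1, (hD3mem y hy).2, map_smul, (hD2mem _ hKay).2, hμ_eq]
    module
  -- the key symmetric identity
  have hstar : ∀ a ∈ D2s lam1 e1 K, ∀ b ∈ D2s lam1 e1 K, ∀ c ∈ D2s lam1 e1 K,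
      K a (Lop lam1 e1 K b c) + K b (Lop lam1 e1 K a c) + K c (Lop lam1 e1 K a b)
        = (lam1 * η / 2) • (⟪b, c⟫ • a + ⟪a, b⟫ • c + ⟪a, c⟫ • b) := by
    intro a ha b hb c hc
    have h := hpar e1 a b c
    rw [hKdecomp b c, Rc_add, Rc_smul, hR3 a ha _ (hLD3 b hb c hc), hRe1 a ha,
      hR2 a ha b hb, hR2 a ha c hc] at h
    simp only [map_sub, map_smul, LinearMap.sub_apply, LinearMap.smul_apply] at h
    rw [hKsymm (Lop lam1 e1 K a b) c, hKsymm b e1, (hD2mem b hb).2, (hD2mem c hc).2] at h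
    apply smul_right_injective V hηne
    show η • _ = η • _
    linear_combination (norm := module) (-1 : ℝ) • h
  -- consequences
  have hvv1 : ⟪v, v⟫ = 1 := by rw [real_inner_self_eq_norm_sq, hvu]; norm_num
  have huu1 : ⟪u, u⟫ = 1 := by rw [real_inner_self_eq_norm_sq, huu]; norm_num
  have horth' : ⟪u, v⟫ = 0 := by rw [real_inner_comm]; exact horth
  have hLsymm : ∀ x y : V, Lop lam1 e1 K x y = Lop lam1 e1 K y x := by
    intro x y; rw [Lop, Lop, hKsymm x y, real_inner_comm x y]
  have hLnorm : ∀ x ∈ D2s lam1 e1 K, ⟪x, x⟫ = 1 →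
      ⟪Lop lam1 e1 K x x, Lop lam1 e1 K x x⟫ = lam1 * η / 2 := by
    intro x hx hx1
    have h := hstar x hx x hx x hx
    rw [hx1] at h
    have h3 : K x (Lop lam1 e1 K x x) = (lam1 * η / 2) • x := by
      linear_combination (norm := module) (1/3 : ℝ) • h
    have iA : ⟪K x (Lop lam1 e1 K x x), x⟫ = ⟪Lop lam1 e1 K x x, Lop lam1 e1 K x x⟫ := by
      rw [hKcub x (Lop lam1 e1 K x x) x, hKdecomp x x, inner_add_left, real_inner_smul_left,
        (hD3mem _ (hLD3 x hx x hx)).1, mul_zero, add_zero]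
    rw [← iA, h3, real_inner_smul_left, hx1, mul_one]
  have hmix : ∀ x ∈ D2s lam1 e1 K, ∀ y ∈ D2s lam1 e1 K, ⟪x, x⟫ = 1 → ⟪y, y⟫ = 1 →
      ⟪x, y⟫ = 0 →
      ⟪Lop lam1 e1 K x x, Lop lam1 e1 K y y⟫
        + 2 * ⟪Lop lam1 e1 K x y, Lop lam1 e1 K x y⟫ = lam1 * η / 2 := by
    intro x hx y hy hx1 hy1 hxy
    have h := hstar x hx y hy y hy
    rw [hy1, hxy] at h
    have h2 : K x (Lop lam1 e1 K y y) + (2 : ℝ) • K y (Lop lam1 e1 K x y)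
        = (lam1 * η / 2) • x := by
      linear_combination (norm := module) h
    have h3 : ⟪K x (Lop lam1 e1 K y y), x⟫ + 2 * ⟪K y (Lop lam1 e1 K x y), x⟫
        = lam1 * η / 2 := by
      have h4 := congrArg (fun z => (⟪z, x⟫ : ℝ)) h2
      simp only [inner_add_left, real_inner_smul_left] at h4
      rw [hx1] at h4
      linarith
    have iA : ⟪K x (Lop lam1 e1 K y y), x⟫ = ⟪Lop lam1 e1 K x x, Lop lam1 e1 K y y⟫ := by
      rw [hKcub x (Lop lam1 e1 K y y) x, hKdecomp x x, inner_add_left, real_inner_smul_left,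
        (hD3mem _ (hLD3 y hy y hy)).1, mul_zero, add_zero]
    have iB : ⟪K y (Lop lam1 e1 K x y), x⟫ = ⟪Lop lam1 e1 K x y, Lop lam1 e1 K x y⟫ := by
      rw [hKcub y (Lop lam1 e1 K x y) x, hKdecomp y x, inner_add_left, real_inner_smul_left,
        (hD3mem _ (hLD3 x hx y hy)).1, mul_zero, add_zero, hLsymm y x]
    rw [iA, iB] at h3
    exact h3
  -- equivalence (ii) ↔ (iii)
  have hiff23 : Lop lam1 e1 K u v = 0 ↔ Lop lam1 e1 K u u = Lop lam1 e1 K v v := by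
    constructor
    · intro h0
      have hm := hmix u hu v hv huu1 hvv1 horth'
      rw [h0] at hm
      simp only [inner_zero_left, mul_zero, add_zero] at hm
      have hcomm : ⟪Lop lam1 e1 K v v, Lop lam1 e1 K u u⟫
          = ⟪Lop lam1 e1 K u u, Lop lam1 e1 K v v⟫ := real_inner_comm _ _
      have hd : ⟪Lop lam1 e1 K u u - Lop lam1 e1 K v v,
          Lop lam1 e1 K u u - Lop lam1 e1 K v v⟫ = 0 := by
        simp only [inner_sub_left, inner_sub_right]
        linarith [hLnorm u hu huu1, hLnorm v hv hvv1]
      have h5 := inner_self_eq_zero.mp hd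
      rwa [sub_eq_zero] at h5
    · intro heq
      have hm := hmix u hu v hv huu1 hvv1 horth'
      rw [heq, hLnorm v hv hvv1] at hm
      have h5 : ⟪Lop lam1 e1 K u v, Lop lam1 e1 K u v⟫ = 0 := by linarith
      exact inner_self_eq_zero.mp h5
  -- (i) ↔ (ii), in symmetric form
  have hVv : ∀ x ∈ D2s lam1 e1 K, ∀ y ∈ D2s lam1 e1 K, ⟪x, y⟫ = 0 →
      (y ∈ Vvs lam1 0 e1 K x ↔ Lop lam1 e1 K y x = 0) := by
    intro x hx y hy hxy
    have hLxy : Lop lam1 e1 K x y = K x y := by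
      rw [Lop, hxy, mul_zero, zero_smul, sub_zero]
    have hyx : ⟪y, x⟫ = 0 := by rw [real_inner_comm]; exact hxy
    constructor
    · intro hmem
      obtain ⟨hmem1, hmem2⟩ := Submodule.mem_inf.mp hmem
      have hP0 : Pop lam1 e1 K x y = 0 := by
        have := Module.End.mem_eigenspace_iff.mp hmem2
        simpa using this
      rw [Pop_eq] at hP0
      have h4 : ⟪K x (Lop lam1 e1 K x y), y⟫ = 0 := by rw [hP0]; simp
      rw [hKcub x (Lop lam1 e1 K x y) y, hLxy] at h4
      have h5 : K x y = 0 := inner_self_eq_zero.mp h4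
      rw [hLsymm y x, hLxy]; exact h5
    · intro h0
      have hKxy0 : K x y = 0 := by
        rw [hKsymm x y]
        have h6 := h0
        rw [Lop, hyx, mul_zero, zero_smul, sub_zero] at h6
        exact h6
      refine Submodule.mem_inf.mpr ⟨Submodule.mem_inf.mpr ⟨hy, ?_⟩, ?_⟩
      · exact Submodule.mem_orthogonal_singleton_iff_inner_right.mpr hxy
      · rw [Module.End.mem_eigenspace_iff, Pop_eq, hLxy, hKxy0, map_zero, zero_smul]
  refine ⟨hVv v hv u hu horth, hiff23, ?_, ?_⟩
  · rw [← hiff23, hVv u hu v hv horth']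
    constructor
    · intro h; rw [hLsymm v u]; exact h
    · intro h; rw [hLsymm u v]; exact h
  · intro hmem w hw huw hvw
    have h0 : Lop lam1 e1 K u v = 0 := (hVv v hv u hu horth).mp hmem
    have heq : Lop lam1 e1 K u u = Lop lam1 e1 K v v := hiff23.mp h0
    have h1 := hstar v hv v hv w hw
    have h2 := hstar u hu u hu w hw
    rw [hvv1, hvw] at h1
    rw [huu1, huw] at h2
    rw [heq] at h2
    linear_combination (norm := module) (1/2 : ℝ) • h1 - (1/2 : ℝ) • h2
end
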